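/- arXiv:2209.11365 — 5 statements merged into one kernel-verified Lean document; each statement's English description precedes it below -/
import Mathlib

section
/- Let E be a real vector space, let f, g : E → ℝ, let x₀, v ∈ E and D ∈ ℝ. Assume that f is concave on all of E, that g(x) ≤ f(x) for every x ∈ E, that f(x₀) = g(x₀), and that g has line derivative D at x₀ in the direction v. Then f also has line derivative D at x₀ in the direction v. -/
/-- Differentiability transfer: if a concave function `f` dominates `g`, touches it at `x₀`,
and `g` has line derivative `D` at `x₀` in the direction `v`, then so does `f`. -/
theorem concave_hasLineDerivAt_of_touching
    {E : Type*} [AddCommGroup E] [Module ℝ E]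
    (f g : E → ℝ) (x₀ v : E) (D : ℝ)
    (hconc : ∀ x y : E, ∀ t : ℝ, t ∈ Set.Icc (0 : ℝ) 1 →
      t * f x + (1 - t) * f y ≤ f (t • x + (1 - t) • y))
    (hle : ∀ x : E, g x ≤ f x)
    (heq : f x₀ = g x₀)
    (hg : HasDerivAt (fun t : ℝ => g (x₀ + t • v)) D 0) :
    HasDerivAt (fun t : ℝ => f (x₀ + t • v)) D 0 := by
  have hzero : x₀ + (0 : ℝ) • v = x₀ := by simp
  -- midpoint concavity
  have key : ∀ t : ℝ, f (x₀ + t • v) + f (x₀ + (-t) • v) ≤ 2 * f x₀ := by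
    intro t
    have h := hconc (x₀ + t • v) (x₀ + (-t) • v) (1/2) (by norm_num)
    have hpt : ((1:ℝ)/2) • (x₀ + t • v) + ((1:ℝ) - 1/2) • (x₀ + (-t) • v) = x₀ := by
      have : ((1:ℝ) - 1/2) = 1/2 := by norm_num
      rw [this]
      module
    rw [hpt] at h
    linarith
  rw [hasDerivAt_iff_isLittleO] at hg ⊢
  simp only [sub_zero, hzero, smul_eq_mul, id] at hg ⊢
  set e : ℝ → ℝ := fun t => g (x₀ + t • v) - g x₀ - t * D with he
  set F : ℝ → ℝ := fun t => f (x₀ + t • v) - f x₀ - t * D with hF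
  have hneg : (fun t : ℝ => e (-t)) =o[nhds 0] (fun t : ℝ => t) := by
    have h1 : Filter.Tendsto (fun t : ℝ => -t) (nhds 0) (nhds 0) := by
      simpa using (Filter.tendsto_id (x := nhds (0:ℝ))).neg
    have h2 := hg.comp_tendsto h1
    exact h2.trans_isBigO (Asymptotics.isBigO_of_le _ (fun t => by simp))
  have hbound : ∀ t : ℝ, ‖F t‖ ≤ ‖(‖e t‖ + ‖e (-t)‖)‖ := by
    intro t
    have h1 : e t ≤ F t := by
      have := hle (x₀ + t • v)
      simp only [he, hF]
      linarith
    have h2 : F t ≤ -e (-t) := by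
      have hk := key t
      have := hle (x₀ + (-t) • v)
      simp only [he, hF]
      ring_nf
      nlinarith
    have ha := le_abs_self (e t)
    have hb := neg_abs_le (e t)
    have hc := le_abs_self (e (-t))
    have hd := neg_abs_le (e (-t))
    have habs : |e t| + |e (-t)| ≤ |(|e t| + |e (-t)|)| := le_abs_self _
    simp only [Real.norm_eq_abs]
    rw [abs_le]
    exact ⟨by linarith, by linarith⟩
  have hFO : F =O[nhds 0] (fun t : ℝ => ‖e t‖ + ‖e (-t)‖) :=
    Asymptotics.isBigO_of_le _ hbound
  have hsum : (fun t : ℝ => ‖e t‖ + ‖e (-t)‖) =o[nhds 0] (fun t : ℝ => t) :=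
    hg.norm_left.add hneg.norm_left
  exact hFO.trans_isLittleO hsum
end

section
/- Let E be a real vector space. For each n ∈ ℕ let φₙ : E → ℝ be concave on all of E, and let δₙ : E → ℝ be such that for every direction w ∈ E, φₙ has line derivative δₙ(w) at 0 in the direction w. Let G : E → ℝ and D : E → ℝ be such that for every direction w ∈ E, G has line derivative D(w) at 0 in the direction w. Assume: (i) for every x ∈ E the sequence (φₙ(x))ₙ is bounded; (ii) G(x) ≤ liminf_{n→∞} φₙ(x) for every x ∈ E; (iii) φₙ(0) converges to G(0) as n → ∞. Then for every v ∈ E the sequence (δₙ(v))ₙ converges to D(v). -/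
open Filter Topology

lemma concave_line_le (h : ℝ → ℝ)
    (hc : ∀ a b t : ℝ, t ∈ Set.Icc (0:ℝ) 1 → t * h a + (1-t) * h b ≤ h (t*a + (1-t)*b))
    (d : ℝ) (hd : HasDerivAt h d 0) : ∀ t : ℝ, h t ≤ h 0 + t * d := by
  have hslope : Tendsto (slope h 0) (𝓝[≠] 0) (𝓝 d) :=
    hasDerivAt_iff_tendsto_slope.mp hd
  intro t
  have hmap0 : Tendsto (fun s : ℝ => s * t) (𝓝 (0:ℝ)) (𝓝 0) := by
    simpa using (continuous_mul_right t).tendsto (0:ℝ)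
  rcases lt_trichotomy t 0 with ht | ht | ht
  · -- t < 0
    have hmap : Tendsto (fun s : ℝ => s * t) (𝓝[>] (0:ℝ)) (𝓝[≠] 0) := by
      apply tendsto_nhdsWithin_of_tendsto_nhds_of_eventually_within
      · exact hmap0.mono_left nhdsWithin_le_nhds
      · filter_upwards [self_mem_nhdsWithin] with s hs
        exact (mul_neg_of_pos_of_neg hs ht).ne
    have hT : Tendsto (fun s : ℝ => slope h 0 (s * t)) (𝓝[>] (0:ℝ)) (𝓝 d) :=
      hslope.comp hmap
    have hb : ∀ᶠ s in 𝓝[>] (0:ℝ), slope h 0 (s*t) ≤ (h t - h 0)/t := by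
      filter_upwards [Ioc_mem_nhdsGT_of_mem ⟨le_refl (0:ℝ), zero_lt_one⟩] with s hs
      have hst : s * t < 0 := mul_neg_of_pos_of_neg hs.1 ht
      have hcon := hc t 0 s ⟨hs.1.le, hs.2⟩
      rw [show s*t + (1-s)*0 = s*t by ring] at hcon
      have key : s * (h t - h 0) ≤ h (s * t) - h 0 := by nlinarith
      rw [slope_def_field, div_le_iff_of_neg (by linarith : s*t - 0 < 0)]
      have heq : (h t - h 0)/t*(s*t-0) = s*(h t - h 0) := by
        rw [sub_zero, mul_comm s t, ← mul_assoc, div_mul_cancel₀ _ ht.ne, mul_comm]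
      linarith
    have hd2 : d ≤ (h t - h 0)/t := le_of_tendsto hT hb
    have := (le_div_iff_of_neg ht).mp hd2
    nlinarith
  · simp [ht]
  · -- t > 0
    have hmap : Tendsto (fun s : ℝ => s * t) (𝓝[>] (0:ℝ)) (𝓝[≠] 0) := by
      apply tendsto_nhdsWithin_of_tendsto_nhds_of_eventually_within
      · exact hmap0.mono_left nhdsWithin_le_nhds
      · filter_upwards [self_mem_nhdsWithin] with s hs
        exact (mul_pos hs ht).ne'
    have hT : Tendsto (fun s : ℝ => slope h 0 (s * t)) (𝓝[>] (0:ℝ)) (𝓝 d) :=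
      hslope.comp hmap
    have hb : ∀ᶠ s in 𝓝[>] (0:ℝ), (h t - h 0)/t ≤ slope h 0 (s*t) := by
      filter_upwards [Ioc_mem_nhdsGT_of_mem ⟨le_refl (0:ℝ), zero_lt_one⟩] with s hs
      have hst : 0 < s * t := mul_pos hs.1 ht
      have hcon := hc t 0 s ⟨hs.1.le, hs.2⟩
      rw [show s*t + (1-s)*0 = s*t by ring] at hcon
      have key : s * (h t - h 0) ≤ h (s * t) - h 0 := by nlinarith
      rw [slope_def_field, div_le_div_iff₀ ht (by linarith : (0:ℝ) < s*t - 0)]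
      nlinarith [mul_le_mul_of_nonneg_left key ht.le]
    have hd2 : (h t - h 0)/t ≤ d := ge_of_tendsto hT hb
    have := (div_le_iff₀ ht).mp hd2
    nlinarith

/-- Abstract variational principle behind the equidistribution theorem: derivatives of a
sequence of concave functionals touching a differentiable minorant at `0` converge to the
derivatives of the minorant. -/
theorem lineDeriv_tendsto_of_concave_liminf
    {E : Type*} [AddCommGroup E] [Module ℝ E]
    (φ : ℕ → E → ℝ) (δ : ℕ → E → ℝ) (G D : E → ℝ)
    (hconc : ∀ n : ℕ, ∀ x y : E, ∀ t : ℝ, t ∈ Set.Icc (0 : ℝ) 1 →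
      t * φ n x + (1 - t) * φ n y ≤ φ n (t • x + (1 - t) • y))
    (hδ : ∀ n : ℕ, ∀ w : E,
      HasDerivAt (fun t : ℝ => φ n ((0 : E) + t • w)) (δ n w) 0)
    (hD : ∀ w : E, HasDerivAt (fun t : ℝ => G ((0 : E) + t • w)) (D w) 0)
    (hbdd : ∀ x : E, ∃ C : ℝ, ∀ n : ℕ, |φ n x| ≤ C)
    (hle : ∀ x : E, G x ≤ Filter.liminf (fun n => φ n x) Filter.atTop)
    (h0 : Filter.Tendsto (fun n => φ n 0) Filter.atTop (nhds (G 0))) :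
    ∀ v : E, Filter.Tendsto (fun n => δ n v) Filter.atTop (nhds (D v)) := by
  intro v
  -- key subgradient inequality for each φ n along the line through v
  have hkey : ∀ n : ℕ, ∀ t : ℝ, φ n (t • v) ≤ φ n 0 + t * δ n v := by
    intro n
    have hder : HasDerivAt (fun t : ℝ => φ n (t • v)) (δ n v) 0 := by
      simpa using hδ n v
    have := concave_line_le (fun t : ℝ => φ n (t • v)) ?_ (δ n v) hder
    · simpa using this
    · intro a b t htI
      have h := hconc n (a • v) (b • v) t htI
      show t * φ n (a • v) + (1-t) * φ n (b • v) ≤ φ n ((t*a + (1-t)*b) • v)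
      rw [add_smul, mul_smul, mul_smul]
      exact h
  -- the line function of G
  set g : ℝ → ℝ := fun t => G (t • v) with hg_def
  have hgder : HasDerivAt g (D v) 0 := by simpa [hg_def] using hD v
  have hgs : Tendsto (slope g 0) (𝓝[≠] (0:ℝ)) (𝓝 (D v)) :=
    hasDerivAt_iff_tendsto_slope.mp hgder
  rw [Metric.tendsto_nhds]
  intro ε hε
  -- choose t > 0 with slope of g at t and -t within ε/4 of D v
  have hball : slope g 0 ⁻¹' Metric.ball (D v) (ε/4) ∈ 𝓝[≠] (0:ℝ) :=
    hgs (Metric.ball_mem_nhds _ (by positivity))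
  rw [Metric.mem_nhdsWithin_iff] at hball
  obtain ⟨r, hr, hsub⟩ := hball
  set t : ℝ := r / 2 with ht_def
  have ht : 0 < t := by positivity
  have hmem : ∀ u : ℝ, u = t ∨ u = -t → dist (slope g 0 u) (D v) < ε/4 := by
    intro u hu
    have : u ∈ Metric.ball (0:ℝ) r ∩ {(0:ℝ)}ᶜ := by
      constructor
      · rcases hu with h | h <;> subst h
        · rw [Metric.mem_ball, Real.dist_eq, sub_zero, abs_of_pos ht, ht_def]; linarith
        · rw [Metric.mem_ball, Real.dist_eq, sub_zero, abs_neg, abs_of_pos ht, ht_def]; linarith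
      · rcases hu with h | h <;> simp [h, ht.ne', ht.ne]
    exact hsub this
  have h₁ := hmem t (Or.inl rfl)
  have h₂ := hmem (-t) (Or.inr rfl)
  rw [Real.dist_eq, slope_def_field] at h₁ h₂
  have h₁' : t * (D v) - t * (ε/4) < g t - g 0 := by
    have := (abs_lt.mp h₁).1
    rw [sub_zero] at this
    have : D v - ε/4 < (g t - g 0) / t := by linarith
    have := (lt_div_iff₀ ht).mp this
    nlinarith
  have h₂' : g 0 - g (-t) < t * (D v) + t * (ε/4) := by
    have := (abs_lt.mp h₂).2
    rw [sub_zero] at this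
    have hlt : (g (-t) - g 0) / (-t) < D v + ε/4 := by linarith
    have := (div_lt_iff_of_neg (by linarith : (-t : ℝ) < 0)).mp hlt
    nlinarith
  -- set η
  set η : ℝ := ε * t / 8 with hη_def
  have hη : 0 < η := by positivity
  -- eventual bounds
  have hA : ∀ᶠ n in atTop, dist (φ n 0) (G 0) < η := h0 (Metric.ball_mem_nhds _ hη)
  have hcobdd : ∀ x : E, IsBoundedUnder (· ≥ ·) (atTop : Filter ℕ) (fun n => φ n x) := by
    intro x
    obtain ⟨C, hC⟩ := hbdd x
    exact Filter.isBoundedUnder_of ⟨-C, fun n => (abs_le.mp (hC n)).1⟩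
  have hB : ∀ᶠ n in atTop, G (t • v) - η < φ n (t • v) :=
    eventually_lt_of_lt_liminf (lt_of_lt_of_le (by linarith) (hle (t • v))) (hcobdd _)
  have hC : ∀ᶠ n in atTop, G ((-t) • v) - η < φ n ((-t) • v) :=
    eventually_lt_of_lt_liminf (lt_of_lt_of_le (by linarith) (hle ((-t) • v))) (hcobdd _)
  filter_upwards [hA, hB, hC] with n hAn hBn hCn
  rw [Real.dist_eq] at hAn ⊢
  have hA1 : φ n 0 < G 0 + η := by have := (abs_lt.mp hAn).2; linarith
  have hA2 : G 0 - η < φ n 0 := by have := (abs_lt.mp hAn).1; linarith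
  have k1 := hkey n t
  have k2 := hkey n (-t)
  have hgt : g t = G (t • v) := rfl
  have hgmt : g (-t) = G ((-t) • v) := rfl
  have hg0 : g 0 = G 0 := by simp [hg_def]
  have e1 : t * (ε/4) = 2 * η := by rw [hη_def]; ring
  have e2 : t * (D v - ε/2) = t * D v - 4 * η := by rw [hη_def]; ring
  have e3 : t * (D v + ε/2) = t * D v + 4 * η := by rw [hη_def]; ring
  -- lower bound : t * δ n v > t * D v - t*ε/2
  have low : D v - ε/2 < δ n v := by
    have : t * (D v - ε/2) < t * δ n v := by
      have : G (t • v) - η ≤ φ n 0 + t * δ n v := le_trans hBn.le k1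
      rw [← hgt] at this
      linarith [h₁', e1, e2, hg0]
    have := (mul_lt_mul_iff_right₀ ht).mp this
    exact this
  have high : δ n v < D v + ε/2 := by
    have : t * δ n v < t * (D v + ε/2) := by
      have hk2 : G ((-t) • v) - η ≤ φ n 0 + (-t) * δ n v := le_trans hCn.le k2
      rw [← hgmt] at hk2
      linarith [h₂', e1, e3, hg0]
    exact (mul_lt_mul_iff_right₀ ht).mp this
  rw [abs_lt]
  constructor <;> linarith
end

section
/- Let X be a nonempty compact topological space, let f : X → X be a surjective continuous map, let λ : X → ℝ be continuous, let a ∈ ℝ and let b ∈ ℝ with b > 1. If λ(f(x)) = b·λ(x) + a for all x ∈ X, then λ is constant, equal to −a/(b−1). -/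
/-- Lemma A.1: a continuous solution of the dynamical equation `λ ∘ f = b·λ + a` on a
nonempty compact space with `f` surjective and `b > 1` is constant equal to `-a/(b-1)`. -/
theorem dynamic_const
    {X : Type*} [TopologicalSpace X] [CompactSpace X] [Nonempty X]
    (f : X → X) (hf : Continuous f) (hsurj : Function.Surjective f)
    (lam : X → ℝ) (hlam : Continuous lam) (a b : ℝ) (hb : 1 < b)
    (h : ∀ x : X, lam (f x) = b * lam x + a) :
    ∀ x : X, lam x = -a / (b - 1) := by
  have hb1 : b - 1 ≠ 0 := by linarith
  set μ : X → ℝ := fun x => lam x + a / (b - 1) with hμ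
  have hμc : Continuous μ := hlam.add continuous_const
  have hstep : ∀ x, μ (f x) = b * μ x := by
    intro x
    simp only [hμ, h x]
    field_simp
    ring
  have hmax : ∃ xM, ∀ y, μ y ≤ μ xM := by
    obtain ⟨xM, _, hxM⟩ := isCompact_univ.exists_isMaxOn Set.univ_nonempty
      hμc.continuousOn
    exact ⟨xM, fun y => hxM (Set.mem_univ y)⟩
  have hmin : ∃ xm, ∀ y, μ xm ≤ μ y := by
    obtain ⟨xm, _, hxm⟩ := isCompact_univ.exists_isMinOn Set.univ_nonempty
      hμc.continuousOn
    exact ⟨xm, fun y => hxm (Set.mem_univ y)⟩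
  obtain ⟨xM, hxM⟩ := hmax
  obtain ⟨xm, hxm⟩ := hmin
  have h1 : μ xM ≤ 0 := by
    have := hxM (f xM)
    rw [hstep] at this
    nlinarith
  have h2 : 0 ≤ μ xm := by
    have := hxm (f xm)
    rw [hstep] at this
    nlinarith
  intro x
  have hle := hxM x
  have hge := hxm x
  have : μ x = 0 := le_antisymm (hle.trans h1) (h2.trans hge)
  have : lam x + a / (b - 1) = 0 := this
  field_simp at this ⊢
  linarith
end

section
/- Let X be a topological space, x ∈ X, u : X → ℝ a continuous function with 0 ≤ u(y) for all y, u(y) < u(x) for all y ≠ x, and u(x) > 0. Let f : X → ℝ satisfy f(y) ≥ 0 for all y, let f be continuous at x, and let ε > 0. Then for every ξ ∈ X there exist an open neighborhood U_ξ of ξ and a positive integer n_ξ such that exp(−f(y)) · (u(y)/u(x))^{n_ξ} ≤ exp(−f(x) + ε) for all y ∈ U_ξ. -/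
/-- The claim inside the proof of the pointwise limit theorem: covering estimate for the
Fubini–Study approximation. -/
theorem fs_claim
    {X : Type*} [TopologicalSpace X] (x : X) (u : X → ℝ)
    (hu : Continuous u) (hu0 : ∀ y : X, 0 ≤ u y)
    (hlt : ∀ y : X, y ≠ x → u y < u x) (hux : 0 < u x)
    (f : X → ℝ) (hf0 : ∀ y : X, 0 ≤ f y) (hfc : ContinuousAt f x)
    (ε : ℝ) (hε : 0 < ε) :
    ∀ ξ : X, ∃ U : Set X, IsOpen U ∧ ξ ∈ U ∧ ∃ n : ℕ, 0 < n ∧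
      ∀ y ∈ U, Real.exp (-f y) * (u y / u x) ^ n ≤ Real.exp (-f x + ε) := by
  intro ξ
  have hratio : ∀ y : X, u y / u x ≤ 1 := by
    intro y
    rw [div_le_one hux]
    by_cases hy : y = x
    · simp [hy]
    · exact (hlt y hy).le
  have hratio0 : ∀ y : X, 0 ≤ u y / u x := fun y => div_nonneg (hu0 y) hux.le
  by_cases hξ : ξ = x
  · -- near x, use continuity of f
    subst hξ
    have hmem : f ⁻¹' Set.Ioi (f ξ - ε) ∈ nhds ξ :=
      hfc (Ioi_mem_nhds (by linarith))
    obtain ⟨U, hUsub, hUopen, hxU⟩ := mem_nhds_iff.mp hmem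
    refine ⟨U, hUopen, hxU, 1, one_pos, fun y hy => ?_⟩
    have hfy : f ξ - ε < f y := hUsub hy
    calc Real.exp (-f y) * (u y / u ξ) ^ 1
        ≤ Real.exp (-f y) * 1 := by
          refine mul_le_mul_of_nonneg_left ?_ (Real.exp_pos _).le
          simpa using hratio y
      _ = Real.exp (-f y) := mul_one _
      _ ≤ Real.exp (-f ξ + ε) := Real.exp_le_exp.mpr (by linarith)
  · -- away from x, ratio is bounded by r < 1
    set r : ℝ := (u ξ / u x + 1) / 2 with hr
    have hc1 : u ξ / u x < 1 := (div_lt_one hux).mpr (hlt ξ hξ)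
    have hr1 : r < 1 := by rw [hr]; linarith
    have hr0 : 0 ≤ r := by have := hratio0 ξ; rw [hr]; linarith
    have hcr : u ξ / u x < r := by rw [hr]; linarith
    obtain ⟨n, hn⟩ := exists_pow_lt_of_lt_one (Real.exp_pos (-f x + ε)) hr1
    set U : Set X := {y | u y / u x < r} with hU
    have hUopen : IsOpen U := isOpen_lt (hu.div_const _) continuous_const
    refine ⟨U, hUopen, hcr, n + 1, Nat.succ_pos n, fun y hy => ?_⟩
    have hyr : u y / u x < r := hy
    calc Real.exp (-f y) * (u y / u x) ^ (n + 1)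
        ≤ 1 * r ^ (n + 1) := by
          refine mul_le_mul ?_ (pow_le_pow_left₀ (hratio0 y) hyr.le _) (pow_nonneg (hratio0 y) _) zero_le_one
          rw [Real.exp_le_one_iff]
          linarith [hf0 y]
      _ = r ^ (n + 1) := one_mul _
      _ ≤ r ^ n := pow_le_pow_of_le_one hr0 hr1.le (Nat.le_succ n)
      _ ≤ Real.exp (-f x + ε) := hn.le
end

section
/- Let X be a nonempty compact topological space, x ∈ X, and u : X → ℝ a continuous function with 0 ≤ u(y) for all y, u(y) < u(x) for all y ≠ x, and u(x) > 0. Let f : X → ℝ satisfy f(y) ≥ 0 for all y and let f be continuous at x. Then the sequence n ↦ sup_{y∈X} exp(−f(y)) · (u(y)/u(x))^n converges, as n → ∞, to exp(−f(x)). -/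
/-- Analytic core of the pointwise limit theorem: the suprema of
`exp(-f y)·(u y / u x)^n` converge to `exp(-f x)`. -/
theorem fs_pointwise_limit
    {X : Type*} [TopologicalSpace X] [CompactSpace X] [Nonempty X]
    (x : X) (u : X → ℝ)
    (hu : Continuous u) (hu0 : ∀ y : X, 0 ≤ u y)
    (hlt : ∀ y : X, y ≠ x → u y < u x) (hux : 0 < u x)
    (f : X → ℝ) (hf0 : ∀ y : X, 0 ≤ f y) (hfc : ContinuousAt f x) :
    Filter.Tendsto (fun n : ℕ => ⨆ y : X, Real.exp (-f y) * (u y / u x) ^ n)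
      Filter.atTop (nhds (Real.exp (-f x))) := by
  set a := Real.exp (-f x) with ha
  have ha0 : 0 < a := Real.exp_pos _
  have hule : ∀ y, u y ≤ u x := by
    intro y
    by_cases h : y = x
    · exact h ▸ le_rfl
    · exact (hlt y h).le
  have hratio0 : ∀ y, 0 ≤ u y / u x := fun y => div_nonneg (hu0 y) hux.le
  have hratio : ∀ y, u y / u x ≤ 1 := fun y => div_le_one_of_le₀ (hule y) hux.le
  have hexp1 : ∀ y, Real.exp (-f y) ≤ 1 := fun y =>
    Real.exp_le_one_iff.mpr (neg_nonpos.mpr (hf0 y))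
  have hterm1 : ∀ (n : ℕ) (y : X), Real.exp (-f y) * (u y / u x) ^ n ≤ 1 := by
    intro n y
    calc Real.exp (-f y) * (u y / u x) ^ n
        ≤ 1 * 1 := mul_le_mul (hexp1 y) (pow_le_one₀ (hratio0 y) (hratio y))
          (pow_nonneg (hratio0 y) n) zero_le_one
      _ = 1 := one_mul 1
  have hbdd : ∀ n : ℕ, BddAbove (Set.range fun y : X => Real.exp (-f y) * (u y / u x) ^ n) :=
    fun n => ⟨1, by rintro _ ⟨y, rfl⟩; exact hterm1 n y⟩
  have hlow : ∀ n : ℕ, a ≤ ⨆ y : X, Real.exp (-f y) * (u y / u x) ^ n := by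
    intro n
    have hx : Real.exp (-f x) * (u x / u x) ^ n = a := by
      rw [div_self hux.ne', one_pow, mul_one]
    calc a = Real.exp (-f x) * (u x / u x) ^ n := hx.symm
      _ ≤ _ := le_ciSup (hbdd n) x
  rw [Metric.tendsto_atTop]
  intro ε hε
  -- choose δ so that exp(-(f x - δ)) = a + ε/2
  set δ := Real.log (1 + ε / (2 * a)) with hδdef
  have hpos : 0 < ε / (2 * a) := by positivity
  have hδ : 0 < δ := Real.log_pos (by linarith)
  have hexpδ : Real.exp (-(f x - δ)) = a + ε / 2 := by
    have h1 : (0:ℝ) < 1 + ε / (2 * a) := by linarith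
    rw [neg_sub, sub_eq_add_neg, add_comm, Real.exp_add, hδdef, Real.exp_log h1, ← ha]
    field_simp
  have hV' : f ⁻¹' Set.Ioi (f x - δ) ∈ nhds x :=
    hfc (Ioi_mem_nhds (by linarith))
  obtain ⟨V, hVsub, hVopen, hxV⟩ := mem_nhds_iff.mp hV'
  -- bound on V
  have hVbound : ∀ (n : ℕ) (y : X), y ∈ V → Real.exp (-f y) * (u y / u x) ^ n ≤ a + ε / 2 := by
    intro n y hy
    have hfy : f x - δ < f y := hVsub hy
    have h1 : Real.exp (-f y) ≤ a + ε / 2 := by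
      rw [← hexpδ]
      exact Real.exp_le_exp.mpr (by linarith)
    calc Real.exp (-f y) * (u y / u x) ^ n
        ≤ (a + ε / 2) * 1 := mul_le_mul h1 (pow_le_one₀ (hratio0 y) (hratio y))
          (pow_nonneg (hratio0 y) n) (by positivity)
      _ = a + ε / 2 := mul_one _
  -- outside V
  have hmain : ∃ N : ℕ, ∀ n ≥ N, ∀ y : X,
      Real.exp (-f y) * (u y / u x) ^ n ≤ a + ε / 2 := by
    rcases Set.eq_empty_or_nonempty Vᶜ with hC | hC
    · refine ⟨0, fun n _ y => hVbound n y ?_⟩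
      by_contra hy
      exact (Set.eq_empty_iff_forall_notMem.mp hC y) hy
    · obtain ⟨z, hzC, hz⟩ := (IsClosed.isCompact hVopen.isClosed_compl).exists_isMaxOn hC
        hu.continuousOn
      have hzx : z ≠ x := fun h => hzC (h ▸ hxV)
      set c := u z / u x with hc
      have hc0 : 0 ≤ c := hratio0 z
      have hc1 : c < 1 := (div_lt_one hux).mpr (hlt z hzx)
      have htend : Filter.Tendsto (fun n : ℕ => c ^ n) Filter.atTop (nhds 0) :=
        tendsto_pow_atTop_nhds_zero_of_lt_one hc0 hc1
      have hev : ∀ᶠ n in Filter.atTop, c ^ n < a := htend.eventually (gt_mem_nhds ha0)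
      obtain ⟨N, hN⟩ := Filter.eventually_atTop.mp hev
      refine ⟨N, fun n hn y => ?_⟩
      by_cases hy : y ∈ V
      · exact hVbound n y hy
      · have huz : u y ≤ u z := hz hy
        have hyz : u y / u x ≤ c := by rw [hc]; gcongr
        calc Real.exp (-f y) * (u y / u x) ^ n
            ≤ 1 * c ^ n := mul_le_mul (hexp1 y) (pow_le_pow_left₀ (hratio0 y) hyz n)
              (pow_nonneg (hratio0 y) n) zero_le_one
          _ = c ^ n := one_mul _
          _ ≤ a + ε / 2 := by have := hN n hn; linarith
  obtain ⟨N, hN⟩ := hmain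
  refine ⟨N, fun n hn => ?_⟩
  have hup : (⨆ y : X, Real.exp (-f y) * (u y / u x) ^ n) ≤ a + ε / 2 :=
    ciSup_le (hN n hn)
  have hlo := hlow n
  rw [Real.dist_eq, abs_lt]
  constructor <;> linarith
end
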